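/- For every s ∈ (0, 1) and every λ > 0, the improper integral ∫₀^∞ μ^{−s} (μ + λ)^{−1} dμ converges and equals (π / sin(sπ)) · λ^{−s}; equivalently, λ^{−s} = (sin(sπ)/π) ∫₀^∞ μ^{−s} (μ + λ)^{−1} dμ (the scalar Balakrishnan formula). -/

import Mathlib

open MeasureTheory Real Set

/-- Integrability of `μ^{-s} (μ+λ)⁻¹` on `(0,∞)`. -/
lemma balak_integrable {s : ℝ} (hs0 : 0 < s) (hs1 : s < 1) {lam : ℝ} (hlam : 0 < lam) :
    IntegrableOn (fun μ : ℝ => μ ^ (-s) * (μ + lam)⁻¹) (Set.Ioi 0) := by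
  have hmeas : AEStronglyMeasurable (fun μ : ℝ => μ ^ (-s) * (μ + lam)⁻¹)
      (volume.restrict (Set.Ioi (0:ℝ))) := by
    apply ContinuousOn.aestronglyMeasurable _ measurableSet_Ioi
    intro x hx
    exact (((Real.continuousAt_rpow_const x (-s) (Or.inl (ne_of_gt hx))).continuousWithinAt).mul
      (((continuousWithinAt_id.add continuousWithinAt_const)).inv₀ (by simp at hx ⊢; linarith)))
  have h1 : IntegrableOn (fun μ : ℝ => μ ^ (-s) * (μ + lam)⁻¹) (Set.Ioc 0 1) := by
    have hint : IntegrableOn (fun μ : ℝ => μ ^ (-s) * lam⁻¹) (Set.Ioc 0 1) := by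
      apply Integrable.mul_const
      have := (intervalIntegral.intervalIntegrable_rpow' (a := (0:ℝ)) (b := 1)
        (r := -s) (by linarith)).1
      have h' : IntegrableOn (fun x : ℝ => x ^ (-s)) (Ioc 0 1) := by simpa using this
      exact h'
    refine MeasureTheory.Integrable.mono hint
      (hmeas.mono_set Set.Ioc_subset_Ioi_self) ?_
    filter_upwards [ae_restrict_mem measurableSet_Ioc] with x hx
    have hx0 : 0 < x := hx.1
    have h1 : (x + lam)⁻¹ ≤ lam⁻¹ := by
      apply inv_anti₀ hlam; linarith
    have hxp : (0:ℝ) ≤ x ^ (-s) := Real.rpow_nonneg hx0.le _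
    simp only [norm_mul, Real.norm_eq_abs, abs_of_nonneg hxp,
      abs_of_nonneg (inv_nonneg.mpr (by linarith : (0:ℝ) ≤ x + lam)),
      abs_of_nonneg (inv_nonneg.mpr hlam.le)]
    exact mul_le_mul_of_nonneg_left h1 hxp
  have h2 : IntegrableOn (fun μ : ℝ => μ ^ (-s) * (μ + lam)⁻¹) (Set.Ioi 1) := by
    have hint : IntegrableOn (fun μ : ℝ => μ ^ (-s - 1)) (Set.Ioi 1) :=
      integrableOn_Ioi_rpow_of_lt (by linarith) one_pos
    refine MeasureTheory.Integrable.mono hint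
      (hmeas.mono_set (Set.Ioi_subset_Ioi zero_le_one)) ?_
    filter_upwards [ae_restrict_mem measurableSet_Ioi] with x hx
    have hx1 : (1:ℝ) < x := hx
    have hx0 : (0:ℝ) < x := by linarith
    have h1 : (x + lam)⁻¹ ≤ x⁻¹ := by
      apply inv_anti₀ hx0; linarith
    have hxp : (0:ℝ) ≤ x ^ (-s) := Real.rpow_nonneg hx0.le _
    simp only [norm_mul, Real.norm_eq_abs, abs_of_nonneg hxp,
      abs_of_nonneg (inv_nonneg.mpr (by linarith : (0:ℝ) ≤ x + lam)),
      Real.norm_eq_abs, abs_of_nonneg (Real.rpow_nonneg hx0.le _)]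
    calc x ^ (-s) * (x + lam)⁻¹ ≤ x ^ (-s) * x⁻¹ := mul_le_mul_of_nonneg_left h1 hxp
      _ = x ^ (-s - 1) := by
          rw [← Real.rpow_neg_one x, ← Real.rpow_add hx0]; ring_nf
  have : Set.Ioi (0:ℝ) = Set.Ioc 0 1 ∪ Set.Ioi 1 := (Set.Ioc_union_Ioi_eq_Ioi zero_le_one).symm
  rw [this]
  exact h1.union h2

/-- The real Beta-type integral on `(0,1)`. -/
lemma balak_beta {s : ℝ} (hs0 : 0 < s) (hs1 : s < 1) :
    ∫ t in Set.Ioo (0:ℝ) 1, t ^ (-s) * (1 - t) ^ (s - 1) =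
      Real.pi / Real.sin (s * Real.pi) := by
  have hu : 0 < Complex.re ((1:ℂ) - (s:ℂ)) := by simp; linarith
  have hv : 0 < Complex.re ((s:ℂ)) := by simpa using hs0
  have hbeta := Complex.Gamma_mul_Gamma_eq_betaIntegral hu hv
  rw [show (1:ℂ) - (s:ℂ) + s = 1 by ring, Complex.Gamma_one, one_mul] at hbeta
  -- identify complex beta integral with the real one
  have hre : Complex.betaIntegral (1 - (s:ℂ)) (s:ℂ) =
      ((∫ t in (0:ℝ)..1, t ^ (-s) * (1 - t) ^ (s - 1) : ℝ) : ℂ) := by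
    rw [Complex.betaIntegral, ← intervalIntegral.integral_ofReal]
    apply intervalIntegral.integral_congr
    intro x hx
    rw [Set.uIcc_of_le zero_le_one] at hx
    have hx0 : (0:ℝ) ≤ x := hx.1
    have hx1 : (0:ℝ) ≤ 1 - x := by linarith [hx.2]
    show (x:ℂ) ^ ((1:ℂ) - (s:ℂ) - 1) * (1 - (x:ℂ)) ^ ((s:ℂ) - 1) =
      ((x ^ (-s) * (1 - x) ^ (s - 1) : ℝ) : ℂ)
    rw [show ((1:ℂ) - (s:ℂ) - 1) = ((-s : ℝ) : ℂ) by push_cast; ring,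
      show ((s:ℂ) - 1) = ((s - 1 : ℝ) : ℂ) by push_cast; ring,
      show ((1:ℂ) - (x:ℂ)) = ((1 - x : ℝ) : ℂ) by push_cast; ring,
      ← Complex.ofReal_cpow hx0, ← Complex.ofReal_cpow hx1, ← Complex.ofReal_mul]
  have hgam : Complex.Gamma (1 - (s:ℂ)) * Complex.Gamma (s:ℂ) =
      ((Real.Gamma (1 - s) * Real.Gamma s : ℝ) : ℂ) := by
    rw [show ((1:ℂ) - (s:ℂ)) = ((1 - s : ℝ) : ℂ) by push_cast; ring,
      Complex.Gamma_ofReal, Complex.Gamma_ofReal, ← Complex.ofReal_mul]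
  rw [hre, hgam] at hbeta
  have hreal : Real.Gamma (1 - s) * Real.Gamma s =
      ∫ t in (0:ℝ)..1, t ^ (-s) * (1 - t) ^ (s - 1) := by
    exact_mod_cast hbeta
  have hrefl : Real.Gamma s * Real.Gamma (1 - s) = Real.pi / Real.sin (Real.pi * s) :=
    Real.Gamma_mul_Gamma_one_sub s
  rw [intervalIntegral.integral_of_le zero_le_one,
    MeasureTheory.integral_Ioc_eq_integral_Ioo] at hreal
  rw [← hreal, mul_comm (Real.Gamma (1 - s)), hrefl, mul_comm s]

/-- The normalized integral over `(0,∞)`. -/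
lemma balak_one {s : ℝ} (hs0 : 0 < s) (hs1 : s < 1) :
    ∫ x in Set.Ioi (0:ℝ), x ^ (-s) * (1 + x)⁻¹ =
      Real.pi / Real.sin (s * Real.pi) := by
  have himg : (fun t : ℝ => t / (1 - t)) '' Set.Ioo 0 1 = Set.Ioi 0 := by
    ext x
    simp only [Set.mem_image, Set.mem_Ioo, Set.mem_Ioi]
    constructor
    · rintro ⟨t, ⟨ht0, ht1⟩, rfl⟩
      exact div_pos ht0 (by linarith)
    · intro hx
      refine ⟨x / (1 + x), ⟨div_pos hx (by linarith), ?_⟩, ?_⟩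
      · rw [div_lt_one (by linarith)]; linarith
      · field_simp; ring
  have hderiv : ∀ t ∈ Set.Ioo (0:ℝ) 1,
      HasDerivWithinAt (fun t : ℝ => t / (1 - t)) (((1 - t) ^ 2)⁻¹) (Set.Ioo 0 1) t := by
    intro t ht
    have h1 : (1 : ℝ) - t ≠ 0 := by have := ht.2; intro h; linarith [sub_eq_zero.mp h]
    have h := ((hasDerivAt_id t).div ((hasDerivAt_const t (1:ℝ)).sub (hasDerivAt_id t)) h1)
    have heq : (1 * (1 - t) - t * (0 - 1)) / (1 - t) ^ 2 = ((1 - t) ^ 2)⁻¹ := by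
      rw [show 1 * (1 - t) - t * (0 - 1) = 1 by ring, one_div]
    simp only [id_eq, Pi.sub_apply] at h
    rw [heq] at h
    exact h.hasDerivWithinAt
  have hinj : Set.InjOn (fun t : ℝ => t / (1 - t)) (Set.Ioo 0 1) := by
    intro a ha b hb hab
    have ha1 : (1:ℝ) - a ≠ 0 := by have := ha.2; intro h; linarith [sub_eq_zero.mp h]
    have hb1 : (1:ℝ) - b ≠ 0 := by have := hb.2; intro h; linarith [sub_eq_zero.mp h]
    field_simp at hab
    linarith [hab]
  have key := MeasureTheory.integral_image_eq_integral_abs_deriv_smul measurableSet_Ioo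
    hderiv hinj (fun x : ℝ => x ^ (-s) * (1 + x)⁻¹)
  rw [himg] at key
  rw [key, ← balak_beta hs0 hs1]
  apply MeasureTheory.setIntegral_congr_fun measurableSet_Ioo
  intro t ht
  have ht0 : 0 < t := ht.1
  have ht1 : 0 < 1 - t := by linarith [ht.2]
  have habs : |((1 - t) ^ 2)⁻¹| = ((1 - t) ^ 2)⁻¹ := abs_of_pos (by positivity)
  have hplus : 1 + t / (1 - t) = (1 - t)⁻¹ := by field_simp; ring
  have hpow : (t / (1 - t)) ^ (-s) = t ^ (-s) * (1 - t) ^ s := by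
    rw [Real.div_rpow ht0.le ht1.le, Real.rpow_neg ht1.le, div_eq_mul_inv, inv_inv]
  simp only [smul_eq_mul, habs, hplus, hpow, inv_inv]
  rw [Real.rpow_sub ht1, Real.rpow_one]
  field_simp

theorem stmt_11 (s : ℝ) (hs : s ∈ Set.Ioo (0 : ℝ) 1) (lam : ℝ) (hlam : 0 < lam) :
    IntegrableOn (fun μ : ℝ => μ ^ (-s) * (μ + lam)⁻¹) (Set.Ioi 0) ∧
    ∫ μ in Set.Ioi (0 : ℝ), μ ^ (-s) * (μ + lam)⁻¹ =
      (Real.pi / Real.sin (s * Real.pi)) * lam ^ (-s) := by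
  obtain ⟨hs0, hs1⟩ := hs
  refine ⟨balak_integrable hs0 hs1 hlam, ?_⟩
  have hscale : ∫ μ in Set.Ioi (0:ℝ), μ ^ (-s) * (μ + lam)⁻¹ =
      lam ^ (-s) * ∫ x in Set.Ioi (0:ℝ), x ^ (-s) * (1 + x)⁻¹ := by
    have key := MeasureTheory.integral_comp_mul_left_Ioi
      (fun μ : ℝ => μ ^ (-s) * (μ + lam)⁻¹) 0 hlam
    rw [mul_zero] at key
    have h2 : ∀ x ∈ Set.Ioi (0:ℝ),
        (lam * x) ^ (-s) * (lam * x + lam)⁻¹ = lam ^ (-s) * lam⁻¹ * (x ^ (-s) * (1 + x)⁻¹) := by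
      intro x hx
      rw [Real.mul_rpow hlam.le (le_of_lt hx), show lam * x + lam = lam * (1 + x) by ring,
        mul_inv]
      ring
    rw [MeasureTheory.setIntegral_congr_fun measurableSet_Ioi h2,
      MeasureTheory.integral_const_mul, smul_eq_mul] at key
    have hne : lam ≠ 0 := hlam.ne'
    calc ∫ μ in Set.Ioi (0:ℝ), μ ^ (-s) * (μ + lam)⁻¹
        = lam * (lam⁻¹ * ∫ μ in Set.Ioi (0:ℝ), μ ^ (-s) * (μ + lam)⁻¹) := by
          rw [← mul_assoc, mul_inv_cancel₀ hne, one_mul]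
      _ = lam * (lam ^ (-s) * lam⁻¹ * ∫ x in Set.Ioi (0:ℝ), x ^ (-s) * (1 + x)⁻¹) := by
          rw [key]
      _ = lam ^ (-s) * ∫ x in Set.Ioi (0:ℝ), x ^ (-s) * (1 + x)⁻¹ := by
          field_simp
  rw [hscale, balak_one hs0 hs1, mul_comm]
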